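/- If in addition there exists c ∈ (a,b) such that ϕ'(θ) ≤ 0 for all θ ∈ (a,c] and ϕ'(θ) ≥ 0 for all θ ∈ [c,b), then for every fixed θ ∈ (a,b) the function θ̃ ↦ f₂(θ,θ̃) is monotone non-decreasing on (a,c] and monotone non-increasing on [c,b), where f₂(θ,θ̃) = v(θ,θ̃)² + ϕ(θ̃)⁻¹·(∂v/∂θ̃(θ,θ̃))² and ∂v/∂θ̃(θ,θ̃) = u_I(θ)·u_II'(θ̃) − u_I'(θ̃)·u_II(θ). -/

import Mathlib

/-- θ̃ ↦ f₂(θ,θ̃) is non-decreasing on (a,c] and non-increasing on [c,b). -/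
theorem stmt_5 (a b : ℝ) (hab : a < b)
    (ϕ ϕd uI uId uIdd uII uIId uIIdd : ℝ → ℝ)
    (hϕd : ∀ θ ∈ Set.Ioo a b, HasDerivAt ϕ (ϕd θ) θ)
    (hϕdc : ContinuousOn ϕd (Set.Ioo a b))
    (hϕpos : ∀ θ ∈ Set.Ioo a b, 0 < ϕ θ)
    (huId : ∀ θ ∈ Set.Ioo a b, HasDerivAt uI (uId θ) θ)
    (huIdd : ∀ θ ∈ Set.Ioo a b, HasDerivAt uId (uIdd θ) θ)
    (huIId : ∀ θ ∈ Set.Ioo a b, HasDerivAt uII (uIId θ) θ)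
    (huIIdd : ∀ θ ∈ Set.Ioo a b, HasDerivAt uIId (uIIdd θ) θ)
    (hodeI : ∀ θ ∈ Set.Ioo a b, uIdd θ + ϕ θ * uI θ = 0)
    (hodeII : ∀ θ ∈ Set.Ioo a b, uIIdd θ + ϕ θ * uII θ = 0)
    (c : ℝ) (hc : c ∈ Set.Ioo a b)
    (hdec : ∀ θ ∈ Set.Ioc a c, ϕd θ ≤ 0)
    (hinc : ∀ θ ∈ Set.Ico c b, 0 ≤ ϕd θ) :
    ∀ θ ∈ Set.Ioo a b,
      MonotoneOn
        (fun t => (uI θ * uII t - uI t * uII θ) ^ 2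
            + (ϕ t)⁻¹ * (uI θ * uIId t - uId t * uII θ) ^ 2)
        (Set.Ioc a c) ∧
      AntitoneOn
        (fun t => (uI θ * uII t - uI t * uII θ) ^ 2
            + (ϕ t)⁻¹ * (uI θ * uIId t - uId t * uII θ) ^ 2)
        (Set.Ico c b) := by
  intro θ hθ
  set f : ℝ → ℝ := fun t => (uI θ * uII t - uI t * uII θ) ^ 2
      + (ϕ t)⁻¹ * (uI θ * uIId t - uId t * uII θ) ^ 2 with hf
  set W : ℝ → ℝ := fun t => uI θ * uIId t - uId t * uII θ with hW
  have key : ∀ t ∈ Set.Ioo a b, HasDerivAt f (-ϕd t * (W t) ^ 2 / (ϕ t) ^ 2) t := by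
    intro t ht
    have hϕt := (hϕpos t ht).ne'
    have hV : HasDerivAt (fun s => uI θ * uII s - uI s * uII θ) (W t) t := by
      have := ((huIId t ht).const_mul (uI θ)).sub ((huId t ht).mul_const (uII θ))
      exact this
    have hWd : HasDerivAt W (-ϕ t * (uI θ * uII t - uI t * uII θ)) t := by
      have := ((huIIdd t ht).const_mul (uI θ)).sub ((huIdd t ht).mul_const (uII θ))
      have h1 : uIdd t = -(ϕ t * uI t) := by linarith [hodeI t ht]
      have h2 : uIIdd t = -(ϕ t * uII t) := by linarith [hodeII t ht]
      refine this.congr_deriv ?_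
      rw [h1, h2]; ring
    have hinv : HasDerivAt (fun s => (ϕ s)⁻¹) (-ϕd t / (ϕ t) ^ 2) t :=
      (hϕd t ht).inv hϕt
    have := (hV.pow 2).add ((hinv.mul (hWd.pow 2)))
    refine this.congr_deriv ?_
    field_simp
    rw [Pi.pow_apply]; ring
  have hsubl : Set.Ioc a c ⊆ Set.Ioo a b := fun x hx =>
    ⟨hx.1, lt_of_le_of_lt hx.2 hc.2⟩
  have hsubr : Set.Ico c b ⊆ Set.Ioo a b := fun x hx =>
    ⟨lt_of_lt_of_le hc.1 hx.1, hx.2⟩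
  have hcont : ∀ s : Set ℝ, s ⊆ Set.Ioo a b → ContinuousOn f s := fun s hs x hx =>
    ((key x (hs hx)).continuousAt).continuousWithinAt
  constructor
  · apply monotoneOn_of_deriv_nonneg (convex_Ioc a c) (hcont _ hsubl)
    · intro x hx
      exact ((key x (hsubl (Set.Ioo_subset_Ioc_self (by simpa using hx)))).differentiableAt.differentiableWithinAt)
    · intro x hx
      rw [interior_Ioc] at hx
      have hx' : x ∈ Set.Ioc a c := Set.Ioo_subset_Ioc_self hx
      rw [(key x (hsubl hx')).deriv]
      have h1 : ϕd x ≤ 0 := hdec x hx'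
      have h2 : (0:ℝ) < (ϕ x) ^ 2 := pow_pos (hϕpos x (hsubl hx')) 2
      exact div_nonneg (mul_nonneg (by linarith) (sq_nonneg _)) h2.le
  · apply antitoneOn_of_deriv_nonpos (convex_Ico c b) (hcont _ hsubr)
    · intro x hx
      rw [interior_Ico] at hx
      exact ((key x (hsubr (Set.Ioo_subset_Ico_self hx))).differentiableAt.differentiableWithinAt)
    · intro x hx
      rw [interior_Ico] at hx
      have hx' : x ∈ Set.Ico c b := Set.Ioo_subset_Ico_self hx
      rw [(key x (hsubr hx')).deriv]
      have h1 : 0 ≤ ϕd x := hinc x hx'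
      have h2 : (0:ℝ) < (ϕ x) ^ 2 := pow_pos (hϕpos x (hsubr hx')) 2
      have h3 : (0:ℝ) ≤ (W x) ^ 2 := sq_nonneg _
      apply div_nonpos_of_nonpos_of_nonneg
      · nlinarith
      · positivity
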